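/- Let K be an algebraically closed field and m, n, p ≥ 2 integers invertible in K. Then there exist elements x, y ∈ PGL₂(K) such that x has order m, y has order n, and xy has order p. -/
import Mathlib

open Matrix

section PGL2Aux

variable {K : Type*} [Field K]

private lemma ch2 (M : Matrix (Fin 2) (Fin 2) K) (α β : K)
    (ht : M.trace = α + β) (hd : M.det = α * β) :
    M * M = (α + β) • M - (α * β) • 1 := by
  rw [← ht, ← hd]
  ext i j
  fin_cases i <;> fin_cases j <;>
    simp [Matrix.mul_apply, Matrix.trace_fin_two, Matrix.det_fin_two, Fin.sum_univ_two,
      Matrix.one_apply] <;> ring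

private lemma pow_rep (M : Matrix (Fin 2) (Fin 2) K) (α β : K)
    (h : M * M = (α + β) • M - (α * β) • 1) (k : ℕ) :
    (α - β) • M ^ k = (α ^ k) • (M - β • 1) - (β ^ k) • (M - α • 1) := by
  have e1 : (M - β • 1) * M = α • (M - β • 1) := by
    rw [sub_mul, smul_mul_assoc, one_mul, h]; module
  have e2 : (M - α • 1) * M = β • (M - α • 1) := by
    rw [sub_mul, smul_mul_assoc, one_mul, h]; module
  induction k with
  | zero => simp; module
  | succ k ih =>
      calc (α - β) • M ^ (k + 1) = ((α - β) • M ^ k) * M := by rw [pow_succ, smul_mul_assoc]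
        _ = (α ^ k • (M - β • 1) - β ^ k • (M - α • 1)) * M := by rw [ih]
        _ = α ^ k • ((M - β • 1) * M) - β ^ k • ((M - α • 1) * M) := by
            rw [sub_mul, smul_mul_assoc, smul_mul_assoc]
        _ = α ^ (k + 1) • (M - β • 1) - β ^ (k + 1) • (M - α • 1) := by
            rw [e1, e2, smul_smul, smul_smul, ← pow_succ, ← pow_succ]

private lemma pow_scalar_iff (M : Matrix (Fin 2) (Fin 2) K) (α β : K) (hαβ : α ≠ β)
    (hns : ∀ c : K, M ≠ c • 1)
    (h : M * M = (α + β) • M - (α * β) • 1) (k : ℕ) :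
    (∃ c : K, M ^ k = c • 1) ↔ α ^ k = β ^ k := by
  constructor
  · rintro ⟨c, hc⟩
    by_contra hne
    have hrep := pow_rep M α β h k
    rw [hc] at hrep
    have h2 : (α ^ k - β ^ k) • M
        = ((α - β) * c + α ^ k * β - β ^ k * α) • (1 : Matrix (Fin 2) (Fin 2) K) := by
      linear_combination (norm := module) -hrep
    have hd : α ^ k - β ^ k ≠ 0 := sub_ne_zero.mpr hne
    apply hns (((α - β) * c + α ^ k * β - β ^ k * α) / (α ^ k - β ^ k))
    have := congrArg (fun X => (α ^ k - β ^ k)⁻¹ • X) h2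
    simpa [smul_smul, inv_mul_cancel₀ hd, div_eq_inv_mul] using this
  · intro hk
    refine ⟨α ^ k, ?_⟩
    have hrep := pow_rep M α β h k
    rw [hk] at hrep
    have h2 : (α - β) • M ^ k = (α - β) • ((β ^ k) • (1 : Matrix (Fin 2) (Fin 2) K)) := by
      linear_combination (norm := module) hrep
    have hd : α - β ≠ 0 := sub_ne_zero.mpr hαβ
    have := smul_right_injective (Matrix (Fin 2) (Fin 2) K) hd h2
    rw [this, hk]

private lemma mem_center_GL2_iff (g : GL (Fin 2) K) :
    g ∈ Subgroup.center (GL (Fin 2) K) ↔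
      ∃ c : K, (g : Matrix (Fin 2) (Fin 2) K) = c • 1 := by
  constructor
  · intro hg
    rw [Subgroup.mem_center_iff] at hg
    have hU : Matrix.det !![(1:K), 1; 0, 1] ≠ 0 := by simp [Matrix.det_fin_two_of]
    have hV : Matrix.det !![(1:K), 0; 1, 1] ≠ 0 := by simp [Matrix.det_fin_two_of]
    have h1 : !![(1:K), 1; 0, 1] * g = (g : Matrix (Fin 2) (Fin 2) K) * !![(1:K), 1; 0, 1] :=
      congrArg Units.val (hg (Matrix.GeneralLinearGroup.mkOfDetNeZero _ hU))
    have h2 : !![(1:K), 0; 1, 1] * g = (g : Matrix (Fin 2) (Fin 2) K) * !![(1:K), 0; 1, 1] :=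
      congrArg Units.val (hg (Matrix.GeneralLinearGroup.mkOfDetNeZero _ hV))
    have e1 := congrFun (congrFun h1 0) 0
    have e2 := congrFun (congrFun h1 0) 1
    have e3 := congrFun (congrFun h2 0) 0
    have e4 := congrFun (congrFun h1 1) 1
    simp [Matrix.mul_apply, Fin.sum_univ_two] at e1 e2 e3 e4
    refine ⟨(g : Matrix (Fin 2) (Fin 2) K) 0 0, ?_⟩
    have h11 : (g : Matrix (Fin 2) (Fin 2) K) 1 1 = (g : Matrix (Fin 2) (Fin 2) K) 0 0 := by
      linear_combination e2
    ext i j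
    fin_cases i <;> fin_cases j <;>
        simp only [Matrix.smul_apply, Matrix.one_apply, Fin.isValue] <;> norm_num
    · exact e3
    · exact e1
    · exact h11
  · rintro ⟨c, hc⟩
    rw [Subgroup.mem_center_iff]
    intro h
    apply Units.ext
    push_cast
    rw [hc, mul_smul_comm, smul_mul_assoc, mul_one, one_mul]

private lemma orderOf_mk_eq (g : GL (Fin 2) K) (α β : K) (hβ : β ≠ 0) (hαβ : α ≠ β)
    (hns : ∀ c : K, (g : Matrix (Fin 2) (Fin 2) K) ≠ c • 1)
    (h : (g : Matrix (Fin 2) (Fin 2) K) * g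
        = (α + β) • (g : Matrix (Fin 2) (Fin 2) K) - (α * β) • 1)
    {q : ℕ} {θ : K} (hθ : IsPrimitiveRoot θ q) (hq : q ≠ 0) (hθαβ : α = θ * β) :
    orderOf (QuotientGroup.mk g :
        GL (Fin 2) K ⧸ Subgroup.center (GL (Fin 2) K)) = q := by
  have key : ∀ k : ℕ,
      (QuotientGroup.mk g : GL (Fin 2) K ⧸ Subgroup.center (GL (Fin 2) K)) ^ k = 1 ↔ q ∣ k := by
    intro k
    have hpk : (QuotientGroup.mk g : GL (Fin 2) K ⧸ Subgroup.center (GL (Fin 2) K)) ^ k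
        = QuotientGroup.mk (g ^ k) := rfl
    rw [hpk, QuotientGroup.eq_one_iff, mem_center_GL2_iff]
    have hcoe : ((g ^ k : GL (Fin 2) K) : Matrix (Fin 2) (Fin 2) K)
        = (g : Matrix (Fin 2) (Fin 2) K) ^ k := Units.val_pow_eq_pow_val g k
    rw [hcoe, pow_scalar_iff _ α β hαβ hns h k, hθαβ, mul_pow]
    constructor
    · intro hk
      have hθk : θ ^ k = 1 := by
        have hbk : β ^ k ≠ 0 := pow_ne_zero _ hβ
        have hz : (θ ^ k - 1) * β ^ k = 0 := by linear_combination hk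
        rcases mul_eq_zero.mp hz with h' | h'
        · exact sub_eq_zero.mp h'
        · exact absurd h' hbk
      exact (hθ.pow_eq_one_iff_dvd k).mp hθk
    · intro hk
      rw [(hθ.pow_eq_one_iff_dvd k).mpr hk, one_mul]
  refine Nat.dvd_antisymm ?_ ?_
  · exact orderOf_dvd_of_pow_eq_one ((key q).mpr dvd_rfl)
  · exact (key _).mp (pow_orderOf_eq_one _)

end PGL2Aux

/-- Let `K` be an algebraically closed field and `m, n, p ≥ 2` integers invertible in `K`.
Then there exist `x, y ∈ PGL₂(K)` (the quotient of `GL₂(K)` by its center, the scalar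
matrices) such that `x` has order `m`, `y` has order `n`, and `xy` has order `p`. -/
theorem exists_elements_PGL2_of_orders
    (K : Type*) [Field K] [IsAlgClosed K] (m n p : ℕ)
    (hm : 2 ≤ m) (hn : 2 ≤ n) (hp : 2 ≤ p)
    (hmK : (m : K) ≠ 0) (hnK : (n : K) ≠ 0) (hpK : (p : K) ≠ 0) :
    ∃ x y : Matrix.GeneralLinearGroup (Fin 2) K ⧸
        Subgroup.center (Matrix.GeneralLinearGroup (Fin 2) K),
      orderOf x = m ∧ orderOf y = n ∧ orderOf (x * y) = p := by
  have hm0 : m ≠ 0 := by omega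
  have hn0 : n ≠ 0 := by omega
  have hp0 : p ≠ 0 := by omega
  have : NeZero (m : K) := ⟨hmK⟩
  have : NeZero (n : K) := ⟨hnK⟩
  have : NeZero (p : K) := ⟨hpK⟩
  obtain ⟨ζ, hζ⟩ := HasEnoughRootsOfUnity.exists_primitiveRoot K m
  obtain ⟨η, hη⟩ := HasEnoughRootsOfUnity.exists_primitiveRoot K n
  obtain ⟨θ, hθ⟩ := HasEnoughRootsOfUnity.exists_primitiveRoot K p
  have hζ0 : ζ ≠ 0 := hζ.ne_zero hm0
  have hη0 : η ≠ 0 := hη.ne_zero hn0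
  have hθ0 : θ ≠ 0 := hθ.ne_zero hp0
  have hζ1 : ζ ≠ 1 := hζ.ne_one hm
  have hη1 : η ≠ 1 := hη.ne_one hn
  have hθ1 : θ ≠ 1 := hθ.ne_one hp
  obtain ⟨b, hb⟩ := IsAlgClosed.exists_pow_nat_eq (ζ * η / θ) (n := 2) (by norm_num)
  have hb0 : b ≠ 0 := by
    intro hb'
    rw [hb', zero_pow (by norm_num : (2:ℕ) ≠ 0)] at hb
    exact div_ne_zero (mul_ne_zero hζ0 hη0) hθ0 hb.symm
  set s : K := θ * b + b with hs
  set a : K := (s - η - 1) / (ζ - 1) with ha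
  set d : K := η + 1 - a with hd
  set c : K := a * d - η with hc
  set A : Matrix (Fin 2) (Fin 2) K := !![ζ, 0; 0, 1] with hA
  set B : Matrix (Fin 2) (Fin 2) K := !![a, 1; c, d] with hB
  have hζ1' : ζ - 1 ≠ 0 := sub_ne_zero.mpr hζ1
  have hdetA : A.det = ζ := by simp [hA, Matrix.det_fin_two_of]
  have hdetA0 : A.det ≠ 0 := by rw [hdetA]; exact hζ0
  have hdetB : B.det = η := by rw [hB, Matrix.det_fin_two_of, hc]; ring
  have hdetB0 : B.det ≠ 0 := by rw [hdetB]; exact hη0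
  set gA : GL (Fin 2) K := Matrix.GeneralLinearGroup.mkOfDetNeZero A hdetA0 with hgA
  set gB : GL (Fin 2) K := Matrix.GeneralLinearGroup.mkOfDetNeZero B hdetB0 with hgB
  have hcA : (gA : Matrix (Fin 2) (Fin 2) K) = A := rfl
  have hcB : (gB : Matrix (Fin 2) (Fin 2) K) = B := rfl
  have hcAB : ((gA * gB : GL (Fin 2) K) : Matrix (Fin 2) (Fin 2) K) = A * B := rfl
  refine ⟨QuotientGroup.mk gA, QuotientGroup.mk gB, ?_, ?_, ?_⟩
  · refine orderOf_mk_eq gA ζ 1 one_ne_zero hζ1 ?_ ?_ hζ hm0 (by ring)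
    · intro cc hcc
      rw [hcA] at hcc
      have h00 := congrFun (congrFun hcc 0) 0
      have h11 := congrFun (congrFun hcc 1) 1
      simp [hA, Matrix.smul_apply, Matrix.one_apply] at h00 h11
      exact hζ1 (by rw [h00, ← h11])
    · rw [hcA]
      refine ch2 A ζ 1 ?_ ?_
      · simp [hA, Matrix.trace_fin_two]
      · rw [hdetA]; ring
  · refine orderOf_mk_eq gB η 1 one_ne_zero hη1 ?_ ?_ hη hn0 (by ring)
    · intro cc hcc
      rw [hcB] at hcc
      have h01 := congrFun (congrFun hcc 0) 1
      simp [hB, Matrix.smul_apply, Matrix.one_apply] at h01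
    · rw [hcB]
      refine ch2 B η 1 ?_ ?_
      · rw [hB, Matrix.trace_fin_two_of, hd]; ring
      · rw [hdetB]; ring
  · have hmul : (QuotientGroup.mk gA : GL (Fin 2) K ⧸ Subgroup.center (GL (Fin 2) K)) *
        QuotientGroup.mk gB = QuotientGroup.mk (gA * gB) := rfl
    rw [hmul]
    have hθb : θ * b ≠ b := by
      intro hh
      apply hθ1
      have : (θ - 1) * b = 0 := by ring_nf; linear_combination hh
      rcases mul_eq_zero.mp this with h' | h'
      · exact sub_eq_zero.mp h'
      · exact absurd h' hb0
    refine orderOf_mk_eq (gA * gB) (θ * b) b hb0 hθb ?_ ?_ hθ hp0 rfl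
    · intro cc hcc
      rw [hcAB] at hcc
      have h01 := congrFun (congrFun hcc 0) 1
      simp [hA, hB, Matrix.mul_apply, Fin.sum_univ_two, Matrix.smul_apply,
        Matrix.one_apply] at h01
      exact hζ0 h01
    · rw [hcAB]
      have hAB : A * B = !![ζ * a, ζ; c, d] := by
        ext i j
        fin_cases i <;> fin_cases j <;>
          simp [hA, hB, Matrix.mul_apply, Fin.sum_univ_two]
      refine ch2 (A * B) (θ * b) b ?_ ?_
      · rw [hAB, Matrix.trace_fin_two_of, hd, ha, hs]
        field_simp
        ring
      · rw [Matrix.det_mul, hdetA, hdetB]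
        have hbb : (θ * b) * b = θ * (ζ * η / θ) := by rw [← hb]; ring
        rw [hbb]
        field_simp
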